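/- For any HOL term M of HOL type A, with free type variables α1,…,αn and free term variables x1:A1,…,xn:An, the translation of M is well-typed at the translated type: Σ | α1:type,…,αn:type, x1:||A1||,…,xn:||An|| ⊢ |M| : ||A|| holds in the λΠ-calculus modulo rewriting. -/

import Mathlib

set_option autoImplicit false

namespace HolDk

/-! ### Dedukti: the λΠ-calculus modulo rewriting, with de Bruijn indices.

Terms `M, N, A, B ::= x | c | Type | Kind | Πx:A.B | λx:A.M | M N`. -/

inductive DTm : Type
  | var   : ℕ → DTm
  | const : ℕ → DTm
  | type  : DTm
  | kind  : DTm
  | pi    : DTm → DTm → DTm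
  | lam   : DTm → DTm → DTm
  | app   : DTm → DTm → DTm
  deriving DecidableEq

namespace DTm

/-- Shift the free de Bruijn indices `≥ c` up by `d`. -/
def shift (d : ℕ) : ℕ → DTm → DTm
  | c, var n => if n < c then var n else var (n + d)
  | _, const k => const k
  | _, type => type
  | _, kind => kind
  | c, pi A B => pi (shift d c A) (shift d (c+1) B)
  | c, lam A M => lam (shift d c A) (shift d (c+1) M)
  | c, app M N => app (shift d c M) (shift d c N)

/-- Lift a simultaneous substitution under one binder. -/
def liftSub (σ : ℕ → DTm) : ℕ → DTm
  | 0 => var 0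
  | n+1 => shift 1 0 (σ n)

/-- Simultaneous substitution. -/
def subst (σ : ℕ → DTm) : DTm → DTm
  | var n => σ n
  | const k => const k
  | type => type
  | kind => kind
  | pi A B => pi (subst σ A) (subst (liftSub σ) B)
  | lam A M => lam (subst σ A) (subst (liftSub σ) M)
  | app M N => app (subst σ M) (subst σ N)

/-- Substitution `[N/x]M` of `N` for the de Bruijn index `0` in `M`. -/
def subst0 (M N : DTm) : DTm :=
  subst (fun n => match n with | 0 => N | n+1 => var n) M

/-- Non-dependent product `A → B`. -/
def arr (A B : DTm) : DTm := pi A (shift 1 0 B)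

end DTm

/-- Signatures `Σ ::= · | Σ, c : A | Σ, [Γ] M ⇝ N`. -/
inductive Sig : Type
  | empty : Sig
  | pushConst : Sig → ℕ → DTm → Sig
  | pushRule : Sig → List DTm → DTm → DTm → Sig

/-- Lookup of the type of a constant in a signature. -/
def Sig.constType : Sig → ℕ → Option DTm
  | .empty, _ => none
  | .pushConst S c A, d => if d = c then some A else S.constType d
  | .pushRule S _ _ _, d => S.constType d

/-- Membership of a rewrite rule `[Γ] M ⇝ N` in a signature. -/
def Sig.hasRule : Sig → List DTm → DTm → DTm → Prop
  | .empty, _, _, _ => False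
  | .pushConst S _ _, G, M, N => S.hasRule G M N
  | .pushRule S G' M' N', G, M, N => (G = G' ∧ M = M' ∧ N = N') ∨ S.hasRule G M N

/-- Pure β-reduction (one step, contextual closure). -/
inductive RedBeta : DTm → DTm → Prop
  | beta (A M N) : RedBeta (.app (.lam A M) N) (M.subst0 N)
  | appL {M M'} (N) : RedBeta M M' → RedBeta (.app M N) (.app M' N)
  | appR (M) {N N'} : RedBeta N N' → RedBeta (.app M N) (.app M N')
  | lamTy {A A'} (M) : RedBeta A A' → RedBeta (.lam A M) (.lam A' M)
  | lamBody (A) {M M'} : RedBeta M M' → RedBeta (.lam A M) (.lam A M')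
  | piL {A A'} (B) : RedBeta A A' → RedBeta (.pi A B) (.pi A' B)
  | piR (A) {B B'} : RedBeta B B' → RedBeta (.pi A B) (.pi A B')

/-- The reduction relation `→βΣ`: β-reduction together with the rewrite rules of
the signature (one step, contextual closure). -/
inductive Red (S : Sig) : DTm → DTm → Prop
  | beta (A M N) : Red S (.app (.lam A M) N) (M.subst0 N)
  | rew {G L R} (σ : ℕ → DTm) : S.hasRule G L R → Red S (L.subst σ) (R.subst σ)
  | appL {M M'} (N) : Red S M M' → Red S (.app M N) (.app M' N)
  | appR (M) {N N'} : Red S N N' → Red S (.app M N) (.app M N')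
  | lamTy {A A'} (M) : Red S A A' → Red S (.lam A M) (.lam A' M)
  | lamBody (A) {M M'} : Red S M M' → Red S (.lam A M) (.lam A M')
  | piL {A A'} (B) : Red S A A' → Red S (.pi A B) (.pi A' B)
  | piR (A) {B B'} : Red S B B' → Red S (.pi A B) (.pi A B')

/-- The conversion `≡βΣ`: reflexive symmetric transitive closure of `→βΣ`. -/
def Conv (S : Sig) : DTm → DTm → Prop := Relation.EqvGen (Red S)

mutual
/-- Signature formation `Σ signature`. -/
inductive SigWf : Sig → Prop
  | empty : SigWf .empty
  | pushConst {S : Sig} {c : ℕ} {A s : DTm} : SigWf S → Typed S [] A s →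
      (s = DTm.type ∨ s = DTm.kind) → S.constType c = none →
      SigWf (S.pushConst c A)
  | pushRule {S : Sig} {G : List DTm} {M N A : DTm} : SigWf S →
      Typed S G M A → Typed S G N A → SigWf (S.pushRule G M N)

/-- Context formation `Σ | Γ context` (contexts are lists, head = most recent binding). -/
inductive CtxWf : Sig → List DTm → Prop
  | nil {S : Sig} : SigWf S → CtxWf S []
  | cons {S : Sig} {G : List DTm} {A : DTm} : CtxWf S G → Typed S G A DTm.type →
      CtxWf S (A :: G)

/-- The typing judgment `Σ | Γ ⊢ M : A` of the λΠ-calculus modulo rewriting. -/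
inductive Typed : Sig → List DTm → DTm → DTm → Prop
  | var {S : Sig} {G : List DTm} {n : ℕ} {A : DTm} : CtxWf S G → G[n]? = some A →
      Typed S G (.var n) (A.shift (n+1) 0)
  | const {S : Sig} {G : List DTm} {c : ℕ} {A : DTm} : CtxWf S G →
      S.constType c = some A → Typed S G (.const c) A
  | type {S : Sig} {G : List DTm} : CtxWf S G → Typed S G .type .kind
  | prod {S : Sig} {G : List DTm} {A B s : DTm} : Typed S G A .type →
      Typed S (A :: G) B s → (s = DTm.type ∨ s = DTm.kind) → Typed S G (.pi A B) s
  | abs {S : Sig} {G : List DTm} {A M B : DTm} : Typed S G A .type →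
      Typed S (A :: G) M B → Typed S G (.lam A M) (.pi A B)
  | app {S : Sig} {G : List DTm} {M N A B : DTm} : Typed S G M (.pi A B) →
      Typed S G N A → Typed S G (.app M N) (B.subst0 N)
  | conv {S : Sig} {G : List DTm} {M A B : DTm} : Typed S G M A →
      Typed S G B DTm.type → Conv S A B → Typed S G M B
end

/-! ### HOL -/

/-- HOL types: type variables, `bool`, `ind`, and arrow types. -/
inductive HTy : Type
  | tvar : ℕ → HTy
  | bool : HTy
  | ind  : HTy
  | arr  : HTy → HTy → HTy
  deriving DecidableEq

/-- HOL terms (simply typed λ-terms, de Bruijn indices for term variables),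
with the polymorphic constants `(=_A)` and `select_A`. -/
inductive HTm : Type
  | var    : ℕ → HTm
  | lam    : HTy → HTm → HTm
  | app    : HTm → HTm → HTm
  | eq     : HTy → HTm
  | select : HTy → HTm
  deriving DecidableEq

/-- The HOL proposition `M = N` (at type `A`), i.e. `(=_A) M N`. -/
def HTm.heq (A : HTy) (M N : HTm) : HTm := .app (.app (.eq A) M) N

/-- HOL typing: `Δ ⊢ M : A` where `Δ` types the term variables. -/
inductive HTyped : List HTy → HTm → HTy → Prop
  | var {D : List HTy} {n : ℕ} {A : HTy} : D[n]? = some A → HTyped D (.var n) A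
  | lam {D : List HTy} {A B : HTy} {M : HTm} : HTyped (A :: D) M B →
      HTyped D (.lam A M) (A.arr B)
  | app {D : List HTy} {A B : HTy} {M N : HTm} : HTyped D M (A.arr B) →
      HTyped D N A → HTyped D (.app M N) B
  | eq {D : List HTy} {A : HTy} : HTyped D (.eq A) (A.arr (A.arr .bool))
  | select {D : List HTy} {A : HTy} : HTyped D (.select A) ((A.arr .bool).arr A)

namespace HTm

/-- Shift the free term-variable indices `≥ c` up by `d`. -/
def shift (d : ℕ) : ℕ → HTm → HTm
  | c, var n => if n < c then var n else var (n + d)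
  | c, lam A M => lam A (shift d (c+1) M)
  | c, app M N => app (shift d c M) (shift d c N)
  | _, eq A => eq A
  | _, select A => select A

def liftSub (σ : ℕ → HTm) : ℕ → HTm
  | 0 => var 0
  | n+1 => shift 1 0 (σ n)

/-- Simultaneous capture-avoiding substitution of term variables. -/
def substF (σ : ℕ → HTm) : HTm → HTm
  | var n => σ n
  | lam A M => lam A (substF (liftSub σ) M)
  | app M N => app (substF σ M) (substF σ N)
  | eq A => eq A
  | select A => select A

/-- Substitution `[N/x]M` for the de Bruijn index `0`. -/
def subst0 (M N : HTm) : HTm :=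
  substF (fun n => match n with | 0 => N | n+1 => var n) M

/-- Simultaneous (parallel) substitution `M[M₁/x₁, …, Mₙ/xₙ]` given by a list. -/
def substL (σ : List HTm) (M : HTm) : HTm :=
  substF (fun n => (σ[n]?).getD (var n)) M

end HTm

/-- Type substitution `A[A₁/α₁, …, Aₘ/αₘ]` on HOL types. -/
def HTy.tsub (θ : List HTy) : HTy → HTy
  | .tvar n => (θ[n]?).getD (.tvar n)
  | .bool => .bool
  | .ind => .ind
  | .arr A B => .arr (A.tsub θ) (B.tsub θ)

/-- Type substitution on HOL terms. -/
def HTm.tsub (θ : List HTy) : HTm → HTm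
  | .var n => .var n
  | .lam A M => .lam (A.tsub θ) (M.tsub θ)
  | .app M N => .app (M.tsub θ) (N.tsub θ)
  | .eq A => .eq (A.tsub θ)
  | .select A => .select (A.tsub θ)

/-- All free type variables of a HOL type are `< n`. -/
def HTy.tvLt (n : ℕ) : HTy → Prop
  | .tvar j => j < n
  | .bool => True
  | .ind => True
  | .arr A B => A.tvLt n ∧ B.tvLt n

/-- All free type variables of a HOL term are `< n`. -/
def HTm.tvLt (n : ℕ) : HTm → Prop
  | .var _ => True
  | .lam A M => A.tvLt n ∧ M.tvLt n
  | .app M N => M.tvLt n ∧ N.tvLt n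
  | .eq A => A.tvLt n
  | .select A => A.tvLt n

/-- One-step β-reduction of HOL terms (contextual closure). -/
inductive HBeta : HTm → HTm → Prop
  | beta (A : HTy) (M N : HTm) : HBeta (.app (.lam A M) N) (M.subst0 N)
  | appL {M M'} (N) : HBeta M M' → HBeta (.app M N) (.app M' N)
  | appR (M) {N N'} : HBeta N N' → HBeta (.app M N) (.app M N')
  | lamBody (A) {M M'} : HBeta M M' → HBeta (.lam A M) (.lam A M')

/-- HOL derivations `Γ ⊢ φ` (Fig. 2), in an ambient term-variable context `Δ`,
with hypotheses `Γ` a finite set of propositions.  The `Subst` rule is split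
into a type-substitution rule and a term-substitution rule. -/
inductive HDeriv : List HTy → Finset HTm → HTm → Type
  | refl {D : List HTy} (A : HTy) (M : HTm) :
      HTyped D M A → HDeriv D ∅ (HTm.heq A M M)
  | absThm {D : List HTy} {G : Finset HTm} (A B : HTy) (M N : HTm) :
      HDeriv (A :: D) (G.image (HTm.shift 1 0)) (HTm.heq B M N) →
      HDeriv D G (HTm.heq (A.arr B) (.lam A M) (.lam A N))
  | appThm {D : List HTy} {G G' : Finset HTm} (A B : HTy) (F Gt M N : HTm) :
      HDeriv D G (HTm.heq (A.arr B) F Gt) → HDeriv D G' (HTm.heq A M N) →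
      HDeriv D (G ∪ G') (HTm.heq B (F.app M) (Gt.app N))
  | beta {D : List HTy} (A B : HTy) (M : HTm) :
      HTyped (A :: D) M B →
      HDeriv (A :: D) ∅ (HTm.heq B (.app (.lam A (M.shift 1 1)) (.var 0)) M)
  | assume {D : List HTy} (φ : HTm) : HTyped D φ .bool → HDeriv D {φ} φ
  | eqMp {D : List HTy} {G G' : Finset HTm} (φ ψ : HTm) :
      HDeriv D G (HTm.heq .bool φ ψ) → HDeriv D G' φ →
      HDeriv D (G ∪ G') ψ
  | deductAntiSym {D : List HTy} {G G' : Finset HTm} (φ ψ : HTm) :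
      HDeriv D G φ → HDeriv D G' ψ →
      HDeriv D (G.erase ψ ∪ G'.erase φ) (HTm.heq .bool φ ψ)
  | typeSubst {D : List HTy} {G : Finset HTm} {φ : HTm} (θ : List HTy) :
      HDeriv D G φ →
      HDeriv (D.map (HTy.tsub θ)) (G.image (HTm.tsub θ)) (φ.tsub θ)
  | termSubst {D : List HTy} {G : Finset HTm} {φ : HTm} {D' : List HTy} (σ : List HTm) :
      σ.length = D.length →
      (∀ (i : ℕ) (A : HTy), D[i]? = some A → ∃ t, σ[i]? = some t ∧ HTyped D' t A) →
      HDeriv D G φ →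
      HDeriv D' (G.image (HTm.substL σ)) (HTm.substL σ φ)

/-! ### The Dedukti signature Σ for HOL -/

def cTy : DTm := .const 0
def dBool : DTm := .const 1
def dInd : DTm := .const 2
def tArr (a b : DTm) : DTm := .app (.app (.const 3) a) b
def tTerm (a : DTm) : DTm := .app (.const 4) a
def tEq (a x y : DTm) : DTm := .app (.app (.app (.const 5) a) x) y
def tProof (p : DTm) : DTm := .app (.const 7) p
def dRefl : DTm := .const 8
def dFunExt : DTm := .const 9
def dAppThm : DTm := .const 10
def dPropExt : DTm := .const 11
def dEqMp : DTm := .const 12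
def dImp : DTm := .const 13
def dForall : DTm := .const 14

def tyArrow : DTm := DTm.arr cTy (DTm.arr cTy cTy)
def tyTerm : DTm := DTm.arr cTy .type
def tyEq : DTm := .pi cTy (tTerm (tArr (.var 0) (tArr (.var 0) dBool)))
def tySelect : DTm := .pi cTy (tTerm (tArr (tArr (.var 0) dBool) (.var 0)))
def tyProof : DTm := DTm.arr (tTerm dBool) .type
def tyRefl : DTm :=
  .pi cTy (.pi (tTerm (.var 0)) (tProof (tEq (.var 1) (.var 0) (.var 0))))
def tyFunExt : DTm :=
  .pi cTy (.pi cTy (.pi (tTerm (tArr (.var 1) (.var 0))) (.pi (tTerm (tArr (.var 2) (.var 1)))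
    (DTm.arr
      (.pi (tTerm (.var 3))
        (tProof (tEq (.var 3) (.app (.var 2) (.var 0)) (.app (.var 1) (.var 0)))))
      (tProof (tEq (tArr (.var 3) (.var 2)) (.var 1) (.var 0)))))))
def tyAppThm : DTm :=
  .pi cTy (.pi cTy (.pi (tTerm (tArr (.var 1) (.var 0))) (.pi (tTerm (tArr (.var 2) (.var 1)))
    (.pi (tTerm (.var 3)) (.pi (tTerm (.var 4))
      (DTm.arr (tProof (tEq (tArr (.var 5) (.var 4)) (.var 3) (.var 2)))
        (DTm.arr (tProof (tEq (.var 5) (.var 1) (.var 0)))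
          (tProof (tEq (.var 4) (.app (.var 3) (.var 1)) (.app (.var 2) (.var 0)))))))))))
def tyPropExt : DTm :=
  .pi (tTerm dBool) (.pi (tTerm dBool)
    (DTm.arr (DTm.arr (tProof (.var 0)) (tProof (.var 1)))
      (DTm.arr (DTm.arr (tProof (.var 0)) (tProof (.var 1)))
        (tProof (tEq dBool (.var 1) (.var 0))))))
def tyEqMp : DTm :=
  .pi (tTerm dBool) (.pi (tTerm dBool)
    (DTm.arr (tProof (tEq dBool (.var 1) (.var 0)))
      (DTm.arr (tProof (.var 1)) (tProof (.var 0)))))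

/-- The rewrite rule `[α : type, β : type] term (arrow α β) ⇝ term α → term β`
(in the context list, the head is the most recent variable `β`). -/
def arrowRuleCtx : List DTm := [cTy, cTy]
def arrowRuleL : DTm := tTerm (tArr (.var 1) (.var 0))
def arrowRuleR : DTm := DTm.arr (tTerm (.var 1)) (tTerm (.var 0))

def baseSig : Sig :=
  ((((Sig.empty.pushConst 0 .type).pushConst 1 cTy).pushConst 2 cTy).pushConst 3
    tyArrow).pushConst 4 tyTerm

/-- The HOL signature Σ:
`type : Type`, `bool ind : type`, `arrow : type → type → type`, `term : type → Type`,
`eq`, `select`, the rewrite rule `term (arrow α β) ⇝ term α → term β`,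
`proof : term bool → Type`, and `Refl`, `FunExt`, `AppThm`, `PropExt`, `EqMp`. -/
def holSig : Sig :=
  ((((((((baseSig.pushConst 5 tyEq).pushConst 6 tySelect).pushRule arrowRuleCtx
    arrowRuleL arrowRuleR).pushConst 7 tyProof).pushConst 8 tyRefl).pushConst 9
    tyFunExt).pushConst 10 tyAppThm).pushConst 11 tyPropExt).pushConst 12 tyEqMp

/-! ### The translation -/

/-- Translation `|A|` of a HOL type as a Dedukti term; `ρ` gives the Dedukti
de Bruijn index of each HOL type variable. -/
def transTy (ρ : ℕ → ℕ) : HTy → DTm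
  | .tvar j => .var (ρ j)
  | .bool => dBool
  | .ind => dInd
  | .arr A B => tArr (transTy ρ A) (transTy ρ B)

/-- Lift a variable renaming under one binder. -/
def liftVar (ρ : ℕ → ℕ) : ℕ → ℕ
  | 0 => 0
  | n+1 => ρ n + 1

/-- Translation `|M|` of a HOL term as a Dedukti term; `ρT`, `ρt` give the
Dedukti de Bruijn indices of the free HOL type resp. term variables. -/
def transTm (ρT ρt : ℕ → ℕ) : HTm → DTm
  | .var i => .var (ρt i)
  | .lam A M => .lam (tTerm (transTy ρT A)) (transTm (fun j => ρT j + 1) (liftVar ρt) M)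
  | .app M N => .app (transTm ρT ρt M) (transTm ρT ρt N)
  | .eq A => .app (.const 5) (transTy ρT A)
  | .select A => .app (.const 6) (transTy ρT A)

/-- The Dedukti context `x₁ : ‖A₁‖, …, xₖ : ‖Aₖ‖` translating a HOL
term-variable context (to be placed in front of the `n` type variables). -/
def dTermCtx : List HTy → List DTm
  | [] => []
  | A :: D => tTerm (transTy (fun j => D.length + j) A) :: dTermCtx D

/-- The Dedukti context `‖Γ‖ = h₁ : ‖φ₁‖, …` translating HOL hypotheses;
`k` is the number of HOL term variables in scope. -/
def hypCtx (k : ℕ) : List HTm → List DTm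
  | [] => []
  | φ :: rest =>
      tProof (transTm (fun j => rest.length + k + j) (fun i => rest.length + i) φ) ::
        hypCtx k rest

def mkApps (f : DTm) (args : List DTm) : DTm := args.foldl .app f

def mkTyLams : ℕ → DTm → DTm
  | 0, M => M
  | n+1, M => .lam cTy (mkTyLams n M)

/-- `λx₁ : ‖B₁‖. … λxₖ : ‖Bₖ‖. M` (the head of the list is the innermost binder). -/
def bindTerms (ρT : ℕ → ℕ) : List HTy → DTm → DTm
  | [], M => M
  | A :: D, M => bindTerms ρT D (.lam (tTerm (transTy (fun j => ρT j + D.length) A)) M)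

/-- Translation `|𝒟|` of a HOL derivation as a Dedukti proof term; `ρT`, `ρt`
give the Dedukti indices of free HOL type/term variables, and `ρh` gives the
index of the hypothesis variable `h_φ` for each hypothesis `φ`. -/
def transDeriv : {D : List HTy} → {G : Finset HTm} → {φ : HTm} →
    (ρT ρt : ℕ → ℕ) → (ρh : HTm → ℕ) → HDeriv D G φ → DTm
  | _, _, _, ρT, ρt, _, .refl A M _ =>
      .app (.app dRefl (transTy ρT A)) (transTm ρT ρt M)
  | _, _, _, ρT, ρt, ρh, .absThm A B M N d =>
      .app (.app (.app (.app (.app dFunExt (transTy ρT A)) (transTy ρT B))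
          (transTm ρT ρt (.lam A M))) (transTm ρT ρt (.lam A N)))
        (.lam (tTerm (transTy ρT A))
          (transDeriv (fun j => ρT j + 1) (liftVar ρt)
            (fun χ => ρh (HTm.substF (fun i => .var (i - 1)) χ) + 1) d))
  | _, _, _, ρT, ρt, ρh, .appThm A B F Gt M N d1 d2 =>
      mkApps dAppThm [transTy ρT A, transTy ρT B, transTm ρT ρt F, transTm ρT ρt Gt,
        transTm ρT ρt M, transTm ρT ρt N,
        transDeriv ρT ρt ρh d1, transDeriv ρT ρt ρh d2]
  | _, _, _, ρT, ρt, _, .beta _ B M _ =>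
      .app (.app dRefl (transTy ρT B)) (transTm ρT ρt M)
  | _, _, _, _, _, ρh, .assume φ _ => .var (ρh φ)
  | _, _, _, ρT, ρt, ρh, .eqMp φ ψ d1 d2 =>
      mkApps dEqMp [transTm ρT ρt φ, transTm ρT ρt ψ,
        transDeriv ρT ρt ρh d1, transDeriv ρT ρt ρh d2]
  | _, _, _, ρT, ρt, ρh, .deductAntiSym φ ψ d1 d2 =>
      mkApps dPropExt [transTm ρT ρt φ, transTm ρT ρt ψ,
        .lam (tProof (transTm ρT ρt ψ))
          (transDeriv (fun j => ρT j + 1) (fun i => ρt i + 1)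
            (fun χ => if χ = ψ then 0 else ρh χ + 1) d1),
        .lam (tProof (transTm ρT ρt φ))
          (transDeriv (fun j => ρT j + 1) (fun i => ρt i + 1)
            (fun χ => if χ = φ then 0 else ρh χ + 1) d2)]
  | _, _, _, ρT, ρt, ρh, .typeSubst θ d =>
      mkApps
        (mkTyLams θ.length
          (transDeriv (fun j => if j < θ.length then j else ρT j + θ.length)
            (fun i => ρt i + θ.length)
            (fun χ => ρh (HTm.tsub θ χ) + θ.length) d))
        (θ.reverse.map (transTy ρT))
  | _, _, _, ρT, ρt, ρh, @HDeriv.termSubst D₀ _ _ _ σ _ _ d =>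
      mkApps
        (bindTerms ρT D₀
          (transDeriv (fun j => ρT j + D₀.length)
            (fun i => if i < D₀.length then i else ρt (i - D₀.length) + D₀.length)
            (fun χ => ρh (HTm.substL σ χ) + D₀.length) d))
        (σ.reverse.map (transTm ρT ρt))

/-- All free type variables appearing in a HOL derivation are `< n`. -/
def HDeriv.tvLt (n : ℕ) : {D : List HTy} → {G : Finset HTm} → {φ : HTm} →
    HDeriv D G φ → Prop
  | _, _, _, .refl A M _ => A.tvLt n ∧ M.tvLt n
  | _, _, _, .absThm A B M N d =>
      A.tvLt n ∧ B.tvLt n ∧ M.tvLt n ∧ N.tvLt n ∧ HDeriv.tvLt n d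
  | _, _, _, .appThm A B F Gt M N d1 d2 =>
      A.tvLt n ∧ B.tvLt n ∧ F.tvLt n ∧ Gt.tvLt n ∧ M.tvLt n ∧ N.tvLt n ∧
        HDeriv.tvLt n d1 ∧ HDeriv.tvLt n d2
  | _, _, _, .beta A B M _ => A.tvLt n ∧ B.tvLt n ∧ M.tvLt n
  | _, _, _, .assume φ _ => φ.tvLt n
  | _, _, _, .eqMp φ ψ d1 d2 => φ.tvLt n ∧ ψ.tvLt n ∧ HDeriv.tvLt n d1 ∧ HDeriv.tvLt n d2
  | _, _, _, .deductAntiSym φ ψ d1 d2 =>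
      φ.tvLt n ∧ ψ.tvLt n ∧ HDeriv.tvLt n d1 ∧ HDeriv.tvLt n d2
  | _, _, _, .typeSubst θ d => (∀ A ∈ θ, A.tvLt n) ∧ HDeriv.tvLt (max θ.length n) d
  | _, _, _, .termSubst σ _ _ d => (∀ t ∈ σ, t.tvLt n) ∧ HDeriv.tvLt n d

/-! ### Auxiliary: substitution lemmas -/

namespace DTm

theorem subst_shift1 : ∀ (M : DTm) (c : ℕ) (σ : ℕ → DTm),
    (∀ k, k < c → σ k = .var k) → (∀ k, c ≤ k → σ (k+1) = .var k) →
    subst σ (shift 1 c M) = M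
  | .var n, c, σ, h1, h2 => by
      by_cases h : n < c
      · simp only [shift, if_pos h, subst]; exact h1 n h
      · simp only [shift, if_neg h, subst]; exact h2 n (Nat.le_of_not_lt h)
  | .const k, _, _, _, _ => rfl
  | .type, _, _, _, _ => rfl
  | .kind, _, _, _, _ => rfl
  | .pi A B, c, σ, h1, h2 => by
      simp only [shift, subst]
      congr 1
      · exact subst_shift1 A c σ h1 h2
      · refine subst_shift1 B (c+1) (liftSub σ) ?_ ?_
        · intro k hk
          cases k with
          | zero => rfl
          | succ m => simp [liftSub, h1 m (Nat.lt_of_succ_lt_succ hk), shift]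
        · intro k hk
          cases k with
          | zero => omega
          | succ m =>
            have : c ≤ m := Nat.le_of_succ_le_succ hk
            simp [liftSub, h2 m this, shift]
  | .lam A M, c, σ, h1, h2 => by
      simp only [shift, subst]
      congr 1
      · exact subst_shift1 A c σ h1 h2
      · refine subst_shift1 M (c+1) (liftSub σ) ?_ ?_
        · intro k hk
          cases k with
          | zero => rfl
          | succ m => simp [liftSub, h1 m (Nat.lt_of_succ_lt_succ hk), shift]
        · intro k hk
          cases k with
          | zero => omega
          | succ m =>
            have : c ≤ m := Nat.le_of_succ_le_succ hk
            simp [liftSub, h2 m this, shift]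
  | .app M N, c, σ, h1, h2 => by
      simp only [shift, subst]
      rw [subst_shift1 M c σ h1 h2, subst_shift1 N c σ h1 h2]

theorem subst0_shift (M N : DTm) : (M.shift 1 0).subst0 N = M := by
  refine subst_shift1 M 0 _ (by intro k hk; omega) (by intro k _; rfl)

end DTm
/-! ### Auxiliary: a sound (fuel-bounded) reducer and type inferencer -/

/-- β-redex reduction at the head. -/
def betaRed : DTm → Option DTm
  | .app (.lam _ M) N => some (M.subst0 N)
  | _ => none

/-- Arrow-rule reduction at the head. -/
def ruleRed : DTm → Option DTm
  | .app (.const 4) (.app (.app (.const 3) a) b) =>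
      some (.pi (.app (.const 4) a) (.app (.const 4) (b.shift 1 0)))
  | _ => none

/-- One-step leftmost-outermost reduction; `u` enables the arrow rule. -/
def tstep (u : Bool) : DTm → Option DTm
  | .app M N =>
      match betaRed (.app M N) with
      | some R => some R
      | none =>
        match (if u then ruleRed (.app M N) else none) with
        | some R => some R
        | none =>
          match tstep u M with
          | some M' => some (.app M' N)
          | none =>
            match tstep u N with
            | some N' => some (.app M N')
            | none => none
  | .lam A M =>
      match tstep u A with
      | some A' => some (.lam A' M)
      | none =>
        match tstep u M with
        | some M' => some (.lam A M')
        | none => none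
  | .pi A B =>
      match tstep u A with
      | some A' => some (.pi A' B)
      | none =>
        match tstep u B with
        | some B' => some (.pi A B')
        | none => none
  | _ => none

theorem betaRed_sound {S : Sig} : ∀ {M M' : DTm}, betaRed M = some M' → Red S M M' := by
  intro M M' h
  match M, h with
  | .app (.lam A M0) N, h =>
      simp only [betaRed, Option.some.injEq] at h
      exact h ▸ Red.beta A M0 N

theorem hasRule_mono_const {S : Sig} {c A G L R} (h : S.hasRule G L R) :
    (S.pushConst c A).hasRule G L R := h

theorem ruleRed_sound {S : Sig} (hr : S.hasRule arrowRuleCtx arrowRuleL arrowRuleR) :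
    ∀ {M M' : DTm}, ruleRed M = some M' → Red S M M' := by
  intro M M' h
  match M, h with
  | .app (.const 4) (.app (.app (.const 3) a) b), h =>
      simp only [ruleRed, Option.some.injEq] at h
      subst h
      exact Red.rew (fun n => match n with | 0 => b | 1 => a | n+2 => .var n) hr

theorem tstep_sound {S : Sig} {u : Bool}
    (hr : u = true → S.hasRule arrowRuleCtx arrowRuleL arrowRuleR) :
    ∀ (M M' : DTm), tstep u M = some M' → Red S M M' := by
  intro M
  induction M with
  | var n => intro M' h; simp [tstep] at h
  | const k => intro M' h; simp [tstep] at h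
  | type => intro M' h; simp [tstep] at h
  | kind => intro M' h; simp [tstep] at h
  | pi A B ihA ihB =>
      intro M' h
      simp only [tstep] at h
      split at h
      · cases h; exact Red.piL _ (ihA _ (by assumption))
      · split at h
        · cases h; exact Red.piR _ (ihB _ (by assumption))
        · cases h
  | lam A M ihA ihM =>
      intro M' h
      simp only [tstep] at h
      split at h
      · cases h; exact Red.lamTy _ (ihA _ (by assumption))
      · split at h
        · cases h; exact Red.lamBody _ (ihM _ (by assumption))
        · cases h
  | app M N ihM ihN =>
      intro M' h
      simp only [tstep] at h
      split at h
      · next hb => cases h; exact betaRed_sound hb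
      · split at h
        · next hrr =>
            cases h
            split at hrr
            · exact ruleRed_sound (hr (by assumption)) hrr
            · cases hrr
        · split at h
          · cases h; exact Red.appL _ (ihM _ (by assumption))
          · split at h
            · cases h; exact Red.appR _ (ihN _ (by assumption))
            · cases h

/-- Fuel-bounded normalization. -/
def reduceN (u : Bool) : ℕ → DTm → DTm
  | 0, M => M
  | f+1, M =>
      match tstep u M with
      | some M' => reduceN u f M'
      | none => M

theorem conv_reduceN {S : Sig} {u : Bool}
    (hr : u = true → S.hasRule arrowRuleCtx arrowRuleL arrowRuleR) :
    ∀ (f : ℕ) (M : DTm), Conv S M (reduceN u f M) := by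
  intro f
  induction f with
  | zero => intro M; exact Relation.EqvGen.refl M
  | succ f ih =>
      intro M
      simp only [reduceN]
      split
      · next M' hM' =>
          exact Relation.EqvGen.trans _ _ _
            (Relation.EqvGen.rel _ _ (tstep_sound hr M M' hM')) (ih M')
      · exact Relation.EqvGen.refl M

theorem conv_of_reduceN_eq {S : Sig} {u : Bool}
    (hr : u = true → S.hasRule arrowRuleCtx arrowRuleL arrowRuleR)
    {f : ℕ} {A B : DTm} (h : reduceN u f A = reduceN u f B) : Conv S A B := by
  refine Relation.EqvGen.trans _ _ _ (conv_reduceN hr f A) ?_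
  rw [h]
  exact Relation.EqvGen.symm _ _ (conv_reduceN hr f B)
/-- Fuel-bounded type inference, sound for the λΠ-calculus modulo. -/
def infer (S : Sig) (u : Bool) : ℕ → List DTm → DTm → Option DTm
  | 0, _, _ => none
  | _+1, Γ, .var n => (Γ[n]?).map (fun A => A.shift (n+1) 0)
  | _+1, _, .const c => S.constType c
  | _+1, _, .type => some .kind
  | _+1, _, .kind => none
  | f+1, Γ, .pi A B =>
      if infer S u f Γ A = some .type then
        match infer S u f (A :: Γ) B with
        | some .type => some .type
        | some .kind => some .kind
        | _ => none
      else none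
  | f+1, Γ, .lam A M =>
      if infer S u f Γ A = some .type then
        (infer S u f (A :: Γ) M).map (fun B => .pi A B)
      else none
  | f+1, Γ, .app M N =>
      match infer S u f Γ M with
      | some T =>
        match reduceN u f T with
        | .pi A B =>
          if T = .pi A B ∨ infer S u f Γ (.pi A B) = some .type then
            match infer S u f Γ N with
            | some A' =>
                if A' = A ∨ (reduceN u f A' = reduceN u f A ∧ infer S u f Γ A = some .type)
                then some (B.subst0 N) else none
            | none => none
          else none
        | _ => none
      | none => none

theorem infer_sound {S : Sig} {u : Bool}
    (hr : u = true → S.hasRule arrowRuleCtx arrowRuleL arrowRuleR) :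
    ∀ (f : ℕ) (Γ : List DTm) (M A : DTm),
      infer S u f Γ M = some A → CtxWf S Γ → Typed S Γ M A := by
  intro f
  induction f with
  | zero => intro Γ M A h; simp [infer] at h
  | succ f ih =>
      intro Γ M A h hΓ
      cases M with
      | var n =>
          simp only [infer, Option.map_eq_some_iff] at h
          obtain ⟨B, hB, rfl⟩ := h
          exact Typed.var hΓ hB
      | const c => exact Typed.const hΓ h
      | type =>
          simp only [infer, Option.some.injEq] at h
          exact h ▸ Typed.type hΓ
      | kind => simp [infer] at h
      | pi A0 B0 =>
          simp only [infer] at h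
          split at h
          · next hA =>
              have hA' := ih Γ A0 .type hA hΓ
              have hΓ' : CtxWf S (A0 :: Γ) := CtxWf.cons hΓ hA'
              split at h
              · next hs => cases h; exact Typed.prod hA' (ih _ _ _ hs hΓ') (Or.inl rfl)
              · next hs => cases h; exact Typed.prod hA' (ih _ _ _ hs hΓ') (Or.inr rfl)
              · cases h
          · cases h
      | lam A0 M0 =>
          simp only [infer] at h
          split at h
          · next hA =>
              have hA' := ih Γ A0 .type hA hΓ
              have hΓ' : CtxWf S (A0 :: Γ) := CtxWf.cons hΓ hA'
              simp only [Option.map_eq_some_iff] at h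
              obtain ⟨B, hB, rfl⟩ := h
              exact Typed.abs hA' (ih _ _ _ hB hΓ')
          · cases h
      | app M0 N0 =>
          simp only [infer] at h
          split at h
          · next T hT =>
              split at h
              · next A0 B0 hred =>
                  split at h
                  · next hpi =>
                      have hM0T : Typed S Γ M0 T := ih _ _ _ hT hΓ
                      have hM0 : Typed S Γ M0 (.pi A0 B0) := by
                        rcases hpi with rfl | hpi
                        · exact hM0T
                        · refine Typed.conv hM0T (ih _ _ _ hpi hΓ) ?_
                          have := conv_reduceN (S := S) hr f T
                          rwa [hred] at this
                      split at h
                      · next A' hA' =>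
                          split at h
                          · next hcond =>
                              cases h
                              have hN0 : Typed S Γ N0 A0 := by
                                rcases hcond with rfl | ⟨hconv, hA0⟩
                                · exact ih _ _ _ hA' hΓ
                                · exact Typed.conv (ih _ _ _ hA' hΓ) (ih _ _ _ hA0 hΓ)
                                    (conv_of_reduceN_eq hr hconv)
                              exact Typed.app hM0 hN0
                          · cases h
                      · cases h
                  · cases h
              · cases h
          · cases h
def sig0 : Sig := Sig.empty.pushConst 0 .type
def sig1 : Sig := sig0.pushConst 1 cTy
def sig2 : Sig := sig1.pushConst 2 cTy
def sig3 : Sig := sig2.pushConst 3 tyArrow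
def sig4 : Sig := sig3.pushConst 4 tyTerm
def sig5 : Sig := sig4.pushConst 5 tyEq
def sig6 : Sig := sig5.pushConst 6 tySelect
def sigR : Sig := sig6.pushRule arrowRuleCtx arrowRuleL arrowRuleR
def sig7 : Sig := sigR.pushConst 7 tyProof
def sig8 : Sig := sig7.pushConst 8 tyRefl
def sig9 : Sig := sig8.pushConst 9 tyFunExt
def sig10 : Sig := sig9.pushConst 10 tyAppThm
def sig11 : Sig := sig10.pushConst 11 tyPropExt

example : baseSig = sig4 := rfl
example : holSig = sig11.pushConst 12 tyEqMp := rfl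

example : infer sig2 false 20 [] tyArrow = some .type := by decide
example : infer sig3 false 20 [] tyTerm = some .kind := by decide
example : infer sig4 false 20 [] tyEq = some .type := by decide
example : infer sig5 false 20 [] tySelect = some .type := by decide
example : infer sig6 false 20 [cTy, cTy] arrowRuleL = some .type := by decide
example : infer sig6 false 20 [cTy, cTy] arrowRuleR = some .type := by decide
example : infer sigR false 20 [] tyProof = some .kind := by decide
example : infer sig7 true 30 [] tyRefl = some .type := by decide
example : infer sig8 true 40 [] tyFunExt = some .type := by decide
example : infer sig9 true 40 [] tyAppThm = some .type := by decide
example : infer sig10 true 40 [] tyPropExt = some .type := by decide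
example : infer sig11 true 40 [] tyEqMp = some .type := by decide

theorem hasRule_sigR : sigR.hasRule arrowRuleCtx arrowRuleL arrowRuleR :=
  Or.inl ⟨rfl, rfl, rfl⟩

theorem hasRule_holSig : holSig.hasRule arrowRuleCtx arrowRuleL arrowRuleR :=
  hasRule_sigR

theorem sigWf_holSig : SigWf holSig := by
  have w0 : SigWf sig0 :=
    SigWf.pushConst SigWf.empty (Typed.type (CtxWf.nil SigWf.empty)) (Or.inr rfl) rfl
  have w1 : SigWf sig1 :=
    SigWf.pushConst w0 (Typed.const (CtxWf.nil w0) (by decide)) (Or.inl rfl) rfl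
  have w2 : SigWf sig2 :=
    SigWf.pushConst w1 (Typed.const (CtxWf.nil w1) (by decide)) (Or.inl rfl) rfl
  have w3 : SigWf sig3 :=
    SigWf.pushConst w2 (infer_sound (u := false) (fun h => nomatch h) 20 [] tyArrow .type (by decide)
      (CtxWf.nil w2)) (Or.inl rfl) rfl
  have w4 : SigWf sig4 :=
    SigWf.pushConst w3 (infer_sound (u := false) (fun h => nomatch h) 20 [] tyTerm .kind (by decide)
      (CtxWf.nil w3)) (Or.inr rfl) rfl
  have w5 : SigWf sig5 :=
    SigWf.pushConst w4 (infer_sound (u := false) (fun h => nomatch h) 20 [] tyEq .type (by decide)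
      (CtxWf.nil w4)) (Or.inl rfl) rfl
  have w6 : SigWf sig6 :=
    SigWf.pushConst w5 (infer_sound (u := false) (fun h => nomatch h) 20 [] tySelect .type (by decide)
      (CtxWf.nil w5)) (Or.inl rfl) rfl
  have hctx6 : CtxWf sig6 [cTy, cTy] := by
    refine CtxWf.cons (CtxWf.cons (CtxWf.nil w6) ?_) ?_
    · exact Typed.const (CtxWf.nil w6) (by decide)
    · exact Typed.const (CtxWf.cons (CtxWf.nil w6) (Typed.const (CtxWf.nil w6) (by decide)))
        (by decide)
  have wR : SigWf sigR :=
    SigWf.pushRule w6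
      (infer_sound (u := false) (fun h => nomatch h) 20 [cTy, cTy] arrowRuleL .type (by decide) hctx6)
      (infer_sound (u := false) (fun h => nomatch h) 20 [cTy, cTy] arrowRuleR .type (by decide) hctx6)
  have w7 : SigWf sig7 :=
    SigWf.pushConst wR (infer_sound (u := false) (fun h => nomatch h) 20 [] tyProof .kind (by decide)
      (CtxWf.nil wR)) (Or.inr rfl) rfl
  have w8 : SigWf sig8 :=
    SigWf.pushConst w7 (infer_sound (S := sig7) (u := true) (fun _ => hasRule_sigR) 30 [] tyRefl .type (by decide)
      (CtxWf.nil w7)) (Or.inl rfl) rfl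
  have w9 : SigWf sig9 :=
    SigWf.pushConst w8 (infer_sound (S := sig8) (u := true) (fun _ => hasRule_sigR) 40 [] tyFunExt .type (by decide)
      (CtxWf.nil w8)) (Or.inl rfl) rfl
  have w10 : SigWf sig10 :=
    SigWf.pushConst w9 (infer_sound (S := sig9) (u := true) (fun _ => hasRule_sigR) 40 [] tyAppThm .type (by decide)
      (CtxWf.nil w9)) (Or.inl rfl) rfl
  have w11 : SigWf sig11 :=
    SigWf.pushConst w10 (infer_sound (S := sig10) (u := true) (fun _ => hasRule_sigR) 40 [] tyPropExt .type (by decide)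
      (CtxWf.nil w10)) (Or.inl rfl) rfl
  exact SigWf.pushConst w11 (infer_sound (S := sig11) (u := true) (fun _ => hasRule_sigR) 40 [] tyEqMp .type (by decide)
    (CtxWf.nil w11)) (Or.inl rfl) rfl
/-! ### Auxiliary: translation lemmas -/

theorem transTy_congr {ρ ρ' : ℕ → ℕ} (h : ∀ j, ρ j = ρ' j) :
    ∀ A : HTy, transTy ρ A = transTy ρ' A
  | .tvar j => by simp [transTy, h j]
  | .bool => rfl
  | .ind => rfl
  | .arr A B => by simp [transTy, tArr, transTy_congr h A, transTy_congr h B]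

theorem transTm_congr : ∀ (M : HTm) (ρT ρT' ρt ρt' : ℕ → ℕ),
    (∀ j, ρT j = ρT' j) → (∀ i, ρt i = ρt' i) → transTm ρT ρt M = transTm ρT' ρt' M
  | .var i, _, _, _, _, _, ht => by simp [transTm, ht i]
  | .lam A M, ρT, ρT', ρt, ρt', hT, ht => by
      simp only [transTm, tTerm]
      rw [transTy_congr hT A]
      rw [transTm_congr M (fun j => ρT j + 1) (fun j => ρT' j + 1) (liftVar ρt) (liftVar ρt')
        (fun j => by show ρT j + 1 = ρT' j + 1; rw [hT j])
        (fun i => by cases i with | zero => rfl | succ m => simp [liftVar, ht m])]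
  | .app M N, ρT, ρT', ρt, ρt', hT, ht => by
      simp [transTm, transTm_congr M _ _ _ _ hT ht, transTm_congr N _ _ _ _ hT ht]
  | .eq A, _, _, _, _, hT, _ => by simp [transTm, transTy_congr hT A]
  | .select A, _, _, _, _, hT, _ => by simp [transTm, transTy_congr hT A]

theorem shift_transTy (d : ℕ) (ρ : ℕ → ℕ) :
    ∀ A : HTy, DTm.shift d 0 (transTy ρ A) = transTy (fun j => ρ j + d) A
  | .tvar j => by simp [transTy, DTm.shift]
  | .bool => rfl
  | .ind => rfl
  | .arr A B => by
      simp [transTy, tArr, DTm.shift, shift_transTy d ρ A, shift_transTy d ρ B]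

/-- Typing of translated types. -/
theorem transTy_typed {G : List DTm} {ρ : ℕ → ℕ} {n : ℕ} (hΓ : CtxWf holSig G)
    (hρ : ∀ j, j < n → G[ρ j]? = some cTy) :
    ∀ A : HTy, A.tvLt n → Typed holSig G (transTy ρ A) cTy
  | .tvar j, hA => Typed.var hΓ (hρ j hA)
  | .bool, _ => Typed.const hΓ (by decide)
  | .ind, _ => Typed.const hΓ (by decide)
  | .arr A B, hA => by
      have h3 : Typed holSig G (.const 3) tyArrow := Typed.const hΓ (by decide)
      exact Typed.app (Typed.app h3 (transTy_typed hΓ hρ A hA.1))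
        (transTy_typed hΓ hρ B hA.2)

theorem tTerm_typed {G : List DTm} {a : DTm} (hΓ : CtxWf holSig G)
    (h : Typed holSig G a cTy) : Typed holSig G (tTerm a) .type := by
  have h4 : Typed holSig G (.const 4) tyTerm := Typed.const hΓ (by decide)
  exact Typed.app h4 h

theorem red_arrow (a b : DTm) :
    Red holSig (tTerm (tArr a b)) (.pi (tTerm a) (DTm.shift 1 0 (tTerm b))) :=
  Red.rew (fun n => match n with | 0 => b | 1 => a | n+2 => .var n) hasRule_holSig

theorem dTermCtx_length : ∀ D : List HTy, (dTermCtx D).length = D.length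
  | [] => rfl
  | _ :: D => by simp [dTermCtx, dTermCtx_length D]

theorem dTermCtx_get : ∀ (D : List HTy) (i : ℕ) (A : HTy), D[i]? = some A →
    ∃ ρ : ℕ → ℕ, (dTermCtx D)[i]? = some (tTerm (transTy ρ A)) ∧
      ∀ j, ρ j + (i + 1) = D.length + j
  | [], i, A, h => by simp at h
  | B :: D, 0, A, h => by
      simp only [List.getElem?_cons_zero, Option.some.injEq] at h
      subst h
      exact ⟨fun j => D.length + j, by simp [dTermCtx], fun j => by simp; omega⟩
  | B :: D, i+1, A, h => by
      simp only [List.getElem?_cons_succ] at h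
      obtain ⟨ρ, hg, hρ⟩ := dTermCtx_get D i A h
      refine ⟨ρ, by simpa [dTermCtx] using hg, fun j => by have := hρ j; simp [List.length_cons]; omega⟩

theorem lookup_ty (Δ : List HTy) (n : ℕ) :
    ∀ j, j < n → (dTermCtx Δ ++ List.replicate n cTy)[Δ.length + j]? = some cTy := by
  intro j hj
  rw [List.getElem?_append_right (by simp [dTermCtx_length])]
  simp [dTermCtx_length, List.getElem?_replicate, hj]

theorem ctx_wf_nil : ∀ n : ℕ, CtxWf holSig (List.replicate n cTy)
  | 0 => CtxWf.nil sigWf_holSig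
  | n+1 => by
      rw [List.replicate_succ]
      exact CtxWf.cons (ctx_wf_nil n) (Typed.const (ctx_wf_nil n) (by decide))

theorem ctx_wf (n : ℕ) : ∀ (Δ : List HTy), (∀ B ∈ Δ, B.tvLt n) →
    CtxWf holSig (dTermCtx Δ ++ List.replicate n cTy)
  | [], _ => by simpa [dTermCtx] using ctx_wf_nil n
  | A :: Δ, hΔ => by
      have ih := ctx_wf n Δ (fun B hB => hΔ B (List.mem_cons_of_mem _ hB))
      exact CtxWf.cons ih (tTerm_typed ih (transTy_typed ih (lookup_ty Δ n) A
        (hΔ A List.mem_cons_self)))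

/-- In a well-typed HOL judgment the type's type variables are bounded too. -/
theorem htyped_tvLt {n : ℕ} : ∀ {D : List HTy} {M : HTm} {A : HTy}, HTyped D M A →
    M.tvLt n → (∀ B ∈ D, B.tvLt n) → A.tvLt n := by
  intro D M A ht
  induction ht with
  | var hget => intro _ hD; exact hD _ (List.mem_of_getElem? hget)
  | lam _ ih =>
      intro hM hD
      exact ⟨hM.1, ih hM.2 (by intro B hB; rcases List.mem_cons.1 hB with rfl | hB; exacts [hM.1, hD _ hB])⟩
  | app _ _ ih1 ih2 => intro hM hD; exact (ih1 hM.1 hD).2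
  | eq => intro hM _; exact ⟨hM, hM, trivial⟩
  | select => intro hM _; exact ⟨⟨hM, trivial⟩, hM⟩
theorem shift_tTerm (d : ℕ) (ρ : ℕ → ℕ) (B : HTy) :
    DTm.shift d 0 (tTerm (transTy ρ B)) = tTerm (transTy (fun j => ρ j + d) B) := by
  show DTm.app _ _ = _
  simp only [tTerm, DTm.shift, shift_transTy]

theorem main_aux (n : ℕ) : ∀ {Δ : List HTy} {M : HTm} {A : HTy},
    HTyped Δ M A → M.tvLt n → (∀ B ∈ Δ, B.tvLt n) →
    Typed holSig (dTermCtx Δ ++ List.replicate n cTy)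
      (transTm (fun j => Δ.length + j) (fun i => i) M)
      (tTerm (transTy (fun j => Δ.length + j) A)) := by
  intro Δ M A ht
  induction ht with
  | @var D i A hget =>
      intro _ hΔ
      obtain ⟨ρ, hg, hρ⟩ := dTermCtx_get D i A hget
      have hi : i < (dTermCtx D).length := by
        rw [dTermCtx_length]
        exact (List.getElem?_eq_some_iff.1 hget).1
      have hlook : (dTermCtx D ++ List.replicate n cTy)[i]? = some (tTerm (transTy ρ A)) := by
        rw [List.getElem?_append, if_pos hi]; exact hg
      have hv := Typed.var (ctx_wf n D hΔ) hlook
      have hsh : (tTerm (transTy ρ A)).shift (i+1) 0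
          = tTerm (transTy (fun j => D.length + j) A) := by
        rw [shift_tTerm]
        exact congrArg tTerm (transTy_congr (fun j => hρ j) A)
      rw [hsh] at hv
      exact hv
  | @lam D A B M hbody ih =>
      intro hM hΔ
      have hΔ' : ∀ C ∈ A :: D, C.tvLt n := by
        intro C hC; rcases List.mem_cons.1 hC with rfl | h; exacts [hM.1, hΔ _ h]
      have hG := ctx_wf n D hΔ
      have hB : B.tvLt n := htyped_tvLt hbody hM.2 hΔ'
      have hA' : Typed holSig (dTermCtx D ++ List.replicate n cTy)
          (transTy (fun j => D.length + j) A) cTy :=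
        transTy_typed hG (lookup_ty D n) A hM.1
      have ihh := ih hM.2 hΔ'
      have ihh' : Typed holSig
          (tTerm (transTy (fun j => D.length + j) A) :: (dTermCtx D ++ List.replicate n cTy))
          (transTm (fun j => D.length + j + 1) (liftVar (fun i => i)) M)
          (DTm.shift 1 0 (tTerm (transTy (fun j => D.length + j) B))) := by
        rw [shift_tTerm]
        have e1 : transTm (fun j => (A :: D).length + j) (fun i => i) M
            = transTm (fun j => D.length + j + 1) (liftVar (fun i => i)) M :=
          transTm_congr M _ _ _ _ (fun j => by simp [List.length_cons]; omega)
            (fun i => by cases i <;> rfl)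
        have e2 : transTy (fun j => (A :: D).length + j) B
            = transTy (fun j => D.length + j + 1) B :=
          transTy_congr (fun j => by simp [List.length_cons]; omega) B
        have e3 : dTermCtx (A :: D) ++ List.replicate n cTy
            = tTerm (transTy (fun j => D.length + j) A)
              :: (dTermCtx D ++ List.replicate n cTy) := by
          simp [dTermCtx]
        rw [e1, e2, e3] at ihh
        exact ihh
      have habs := Typed.abs (tTerm_typed hG hA') ihh'
      refine Typed.conv habs ?_ ?_
      · exact tTerm_typed hG (transTy_typed hG (lookup_ty D n) (A.arr B) ⟨hM.1, hB⟩)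
      · exact Relation.EqvGen.symm _ _ (Relation.EqvGen.rel _ _
          (red_arrow (transTy (fun j => D.length + j) A) (transTy (fun j => D.length + j) B)))
  | @app D A B M N htM htN ihM ihN =>
      intro hM hΔ
      have hG := ctx_wf n D hΔ
      have hAB : (A.arr B).tvLt n := htyped_tvLt htM hM.1 hΔ
      have ihM' := ihM hM.1 hΔ
      have ihN' := ihN hM.2 hΔ
      have hA' : Typed holSig (dTermCtx D ++ List.replicate n cTy)
          (transTy (fun j => D.length + j) A) cTy :=
        transTy_typed hG (lookup_ty D n) A hAB.1
      have hdom := tTerm_typed hG hA'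
      have hG' : CtxWf holSig
          (tTerm (transTy (fun j => D.length + j) A) :: (dTermCtx D ++ List.replicate n cTy)) :=
        CtxWf.cons hG hdom
      have hpi : Typed holSig (dTermCtx D ++ List.replicate n cTy)
          (.pi (tTerm (transTy (fun j => D.length + j) A))
            (DTm.shift 1 0 (tTerm (transTy (fun j => D.length + j) B)))) .type := by
        refine Typed.prod hdom ?_ (Or.inl rfl)
        rw [shift_tTerm]
        refine tTerm_typed hG' (transTy_typed hG' ?_ B hAB.2)
        intro j hj
        show (tTerm (transTy (fun j => D.length + j) A)
          :: (dTermCtx D ++ List.replicate n cTy))[D.length + j + 1]? = some cTy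
        rw [List.getElem?_cons_succ]
        exact lookup_ty D n j hj
      have hMconv : Typed holSig (dTermCtx D ++ List.replicate n cTy)
          (transTm (fun j => D.length + j) (fun i => i) M)
          (.pi (tTerm (transTy (fun j => D.length + j) A))
            (DTm.shift 1 0 (tTerm (transTy (fun j => D.length + j) B)))) :=
        Typed.conv ihM' hpi (Relation.EqvGen.rel _ _
          (red_arrow (transTy (fun j => D.length + j) A) (transTy (fun j => D.length + j) B)))
      have happ := Typed.app hMconv ihN'
      rw [DTm.subst0_shift] at happ
      exact happ
  | @eq D A =>
      intro hM hΔ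
      have hG := ctx_wf n D hΔ
      have h5 : Typed holSig (dTermCtx D ++ List.replicate n cTy) (.const 5) tyEq :=
        Typed.const hG (by decide)
      exact Typed.app h5 (transTy_typed hG (lookup_ty D n) A hM)
  | @select D A =>
      intro hM hΔ
      have hG := ctx_wf n D hΔ
      have h6 : Typed holSig (dTermCtx D ++ List.replicate n cTy) (.const 6) tySelect :=
        Typed.const hG (by decide)
      exact Typed.app h6 (transTy_typed hG (lookup_ty D n) A hM)

/-- **Lemma 2 (paper §5).** For any HOL term `M` of HOL type `A`, with free type
variables `α₁, …, αₙ` and free term variables `x₁:A₁, …, xₖ:Aₖ`, the translation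
of `M` is well-typed at the translated type:
`Σ | α₁:type, …, αₙ:type, x₁:‖A₁‖, …, xₖ:‖Aₖ‖ ⊢ |M| : ‖A‖`. -/
theorem hol_term_translation_welltyped (n : ℕ) (Δ : List HTy) (M : HTm) (A : HTy)
    (ht : HTyped Δ M A) (hM : M.tvLt n) (hΔ : ∀ B ∈ Δ, B.tvLt n) :
    Typed holSig (dTermCtx Δ ++ List.replicate n cTy)
      (transTm (fun j => Δ.length + j) (fun i => i) M)
      (tTerm (transTy (fun j => Δ.length + j) A)) :=
  main_aux n ht hM hΔ

end HolDk
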